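/- Let r ≥ 1 be an integer and let i ≠ k be indices in {1, …, r}. Then in the ribbon braid Drinfeld–Kohno Lie algebra t^R(r) one has [ Σ_{m=1}^r t_{mi} , Σ_{m=1}^r t_{mk} − t_{ki} ] = 0. -/
import Mathlib


/-- The set of defining relations of the ribbon braid Drinfeld–Kohno Lie algebra `t^R(r)`:
symmetry `t_{ij} - t_{ji}`, commutation `[t_{ij}, t_{kl}]` for `{i,j} ∩ {k,l} = ∅`, and
`[t_{ij}, t_{ki} + t_{kj}]`. -/
def tRRel (r : ℕ) : Set (FreeLieAlgebra ℚ (Fin r × Fin r)) :=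
  { x | (∃ i j : Fin r, x = FreeLieAlgebra.of ℚ (i, j) - FreeLieAlgebra.of ℚ (j, i)) ∨
        (∃ i j k l : Fin r, ({i, j} : Set (Fin r)) ∩ {k, l} = ∅ ∧
          x = ⁅FreeLieAlgebra.of ℚ (i, j), FreeLieAlgebra.of ℚ (k, l)⁆) ∨
        (∃ i j k : Fin r,
          x = ⁅FreeLieAlgebra.of ℚ (i, j),
                FreeLieAlgebra.of ℚ (k, i) + FreeLieAlgebra.of ℚ (k, j)⁆) }

/-- The Lie ideal generated by the defining relations. -/
noncomputable def tRIdeal (r : ℕ) : LieIdeal ℚ (FreeLieAlgebra ℚ (Fin r × Fin r)) :=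
  LieSubmodule.lieSpan ℚ (FreeLieAlgebra ℚ (Fin r × Fin r)) (tRRel r)

/-- The ribbon braid Drinfeld–Kohno Lie algebra `t^R(r)`. -/
abbrev tR (r : ℕ) :=
  FreeLieAlgebra ℚ (Fin r × Fin r) ⧸ tRIdeal r

/-- The generator `t_{ij}` of `t^R(r)`. -/
noncomputable def tGen (r : ℕ) (i j : Fin r) : tR r :=
  LieSubmodule.Quotient.mk (N := tRIdeal r) (FreeLieAlgebra.of ℚ (i, j))

lemma mk_rel {r : ℕ} {x : FreeLieAlgebra ℚ (Fin r × Fin r)} (hx : x ∈ tRRel r) :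
    (LieSubmodule.Quotient.mk (N := tRIdeal r) x) = 0 :=
  LieSubmodule.Quotient.mk_eq_zero'.mpr (LieSubmodule.subset_lieSpan hx)

lemma tGen_symm (r : ℕ) (i j : Fin r) : tGen r i j = tGen r j i := by
  have h := mk_rel (r := r) (Or.inl ⟨i, j, rfl⟩)
  rw [show (FreeLieAlgebra.of ℚ (i, j) - FreeLieAlgebra.of ℚ (j, i)) =
      (FreeLieAlgebra.of ℚ (i, j)) - (FreeLieAlgebra.of ℚ (j, i)) from rfl] at h
  have h2 : tGen r i j - tGen r j i = 0 := by
    rw [tGen, tGen, LieSubmodule.Quotient.mk, ← Submodule.Quotient.mk_sub]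
    exact h
  rwa [sub_eq_zero] at h2

lemma tGen_rel3 (r : ℕ) (i j k : Fin r) :
    ⁅tGen r i j, tGen r k i + tGen r k j⁆ = 0 := by
  have h := mk_rel (r := r) (Or.inr (Or.inr ⟨i, j, k, rfl⟩))
  rw [tGen, tGen, tGen, LieSubmodule.Quotient.mk, ← Submodule.Quotient.mk_add]
  rw [show (LieSubmodule.Quotient.mk (N := tRIdeal r) : _ → tR r) = Submodule.Quotient.mk from rfl,
    ← LieSubmodule.Quotient.mk_bracket] at *
  exact h

lemma tGen_disj (r : ℕ) (i j k l : Fin r) (h : ({i, j} : Set (Fin r)) ∩ {k, l} = ∅) :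
    ⁅tGen r i j, tGen r k l⁆ = 0 := by
  have h2 := mk_rel (r := r) (Or.inr (Or.inl ⟨i, j, k, l, h, rfl⟩))
  rw [tGen, tGen, ← LieSubmodule.Quotient.mk_bracket]
  exact h2


lemma my_sum_lie {α L : Type*} [LieRing L] (s : Finset α) (f : α → L) (z : L) :
    ⁅∑ m ∈ s, f m, z⁆ = ∑ m ∈ s, ⁅f m, z⁆ := by
  induction s using Finset.cons_induction with
  | empty => simp
  | cons a s ha ih => simp [Finset.sum_cons, add_lie, ih]

lemma my_lie_sum {α L : Type*} [LieRing L] (s : Finset α) (f : α → L) (z : L) :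
    ⁅z, ∑ m ∈ s, f m⁆ = ∑ m ∈ s, ⁅z, f m⁆ := by
  induction s using Finset.cons_induction with
  | empty => simp
  | cons a s ha ih => simp [Finset.sum_cons, lie_add, ih]

/-- `[t_{ab}, t_{ai} + t_{bi}] = 0`. -/
lemma key (r : ℕ) (a b m : Fin r) :
    ⁅tGen r a b, tGen r a m + tGen r b m⁆ = 0 := by
  have := tGen_rel3 r a b m
  rwa [tGen_symm r m a, tGen_symm r m b] at this

/-- centrality: `[t_{ab}, Σ_m t_{mi}] = 0` for `i ∉ {a,b}`. -/
lemma central (r : ℕ) (a b i : Fin r) (hia : i ≠ a) (hib : i ≠ b) :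
    ⁅∑ m : Fin r, tGen r m i, tGen r a b⁆ = 0 := by
  rw [my_sum_lie]
  have hz : ∀ m ∈ Finset.univ, m ∉ ({a, b} : Finset (Fin r)) →
      ⁅tGen r m i, tGen r a b⁆ = 0 := by
    intro m _ hm
    simp only [Finset.mem_insert, Finset.mem_singleton, not_or] at hm
    apply tGen_disj
    ext x
    simp only [Set.mem_inter_iff, Set.mem_insert_iff, Set.mem_singleton_iff, Set.mem_empty_iff_false,
      iff_false, not_and, not_or]
    rintro (rfl | rfl)
    · exact ⟨hm.1, hm.2⟩
    · exact ⟨hia, hib⟩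
  rw [← Finset.sum_subset (Finset.subset_univ ({a, b} : Finset (Fin r))) hz]
  rcases eq_or_ne a b with rfl | hab
  · rw [show ({a, a} : Finset (Fin r)) = {a} from by simp, Finset.sum_singleton]
    have h2 : (2 : ℚ) • ⁅tGen r a i, tGen r a a⁆ = 0 := by
      rw [two_smul, ← add_lie, ← lie_skew, key r a a i, neg_zero]
    exact (smul_eq_zero.mp h2).resolve_left (by norm_num)
  · rw [Finset.sum_insert (by simpa using hab), Finset.sum_singleton, ← add_lie,
      ← lie_skew, key r a b i, neg_zero]


/-- For `i ≠ k`, in `t^R(r)` one has `[Σ_m t_{mi}, Σ_m t_{mk} - t_{ki}] = 0`. -/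
theorem sum_column_bracket_sum_column_sub (r : ℕ) (hr : 1 ≤ r) (i k : Fin r) (hik : i ≠ k) :
    ⁅∑ m : Fin r, tGen r m i, (∑ m : Fin r, tGen r m k) - tGen r k i⁆ = 0 := by
  rw [lie_sub, my_lie_sum]
  have hsum : ∑ n : Fin r, ⁅∑ m : Fin r, tGen r m i, tGen r n k⁆
      = ⁅∑ m : Fin r, tGen r m i, tGen r i k⁆ := by
    rw [Finset.sum_eq_single i]
    · intro n _ hn; exact central r n k i (Ne.symm hn) hik
    · intro h; exact absurd (Finset.mem_univ i) h
  rw [hsum, tGen_symm r k i, sub_self]
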